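/- arXiv:1808.10414 — 2 statements merged into one kernel-verified Lean document; each statement's English description precedes it below -/
import Mathlib

section
/- Let n ≥ 2 and consider the map from (b, z₁, …, z_n) ∈ ℝ^{n+1} to the coefficients (a₀, a₁, …, a_n) of the polynomial b·∏_{j=1}^n (x − z_j) = Σ_{k=0}^n a_k x^k. The absolute value of the Jacobian determinant of this map equals |b|^n · ∏_{1 ≤ i < j ≤ n} |z_i − z_j|. -/
open Polynomial Finset

/-- Coefficient of a product of `X - C (z j)`. -/
lemma coeff_prod_X_sub_C' {ι : Type*} [DecidableEq ι] (s : Finset ι) (z : ι → ℝ) (k : ℕ) :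
    (∏ j ∈ s, (X - C (z j))).coeff k = ∑ t ∈ s.powersetCard k, ∏ i ∈ s \ t, -z i := by
  have h1 : ∀ j : ι, (X : ℝ[X]) - C (z j) = X + C (-z j) := by
    intro j; rw [map_neg]; ring
  simp_rw [h1]
  rw [Finset.prod_add, finset_sum_coeff]
  have h2 : ∀ t ∈ s.powerset,
      ((∏ _i ∈ t, (X : ℝ[X])) * ∏ i ∈ s \ t, C (-z i)).coeff k
        = if t.card = k then ∏ i ∈ s \ t, -z i else 0 := by
    intro t _
    rw [Finset.prod_const, ← map_prod, mul_comm, coeff_C_mul, coeff_X_pow]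
    by_cases h : t.card = k
    · simp [h]
    · rw [if_neg (fun hk => h hk.symm), if_neg h, mul_zero]
  rw [Finset.sum_congr rfl h2, Finset.sum_ite, Finset.sum_const_zero, add_zero,
    Finset.powersetCard_eq_filter]

lemma sdiff_erase_eq {ι : Type*} [DecidableEq ι] {s t : Finset ι} {j : ι} (hj : j ∉ t) :
    (s \ t).erase j = (s.erase j) \ t := by
  ext x
  simp only [Finset.mem_erase, Finset.mem_sdiff]
  tauto

/-- derivative of `v ↦ (∏_{j∈s} (X - C (v j.succ))).coeff k` -/
lemma hasFDerivAt_coeff_prod (n : ℕ) (s : Finset (Fin n)) (k : ℕ) (v : Fin (n+1) → ℝ) :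
    HasFDerivAt (fun w : Fin (n+1) → ℝ => (∏ j ∈ s, (X - C (w j.succ))).coeff k)
      (- ∑ j ∈ s, ((∏ i ∈ s.erase j, (X - C (v i.succ))).coeff k) •
        (ContinuousLinearMap.proj j.succ : (Fin (n+1) → ℝ) →L[ℝ] ℝ)) v := by
  have hfun : (fun w : Fin (n+1) → ℝ => (∏ j ∈ s, (X - C (w j.succ))).coeff k)
      = fun w => ∑ t ∈ s.powersetCard k, ∏ i ∈ s \ t, -(w i.succ) := by
    funext w; exact coeff_prod_X_sub_C' s (fun j => w j.succ) k
  rw [hfun]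
  have H : HasFDerivAt (fun w : Fin (n+1) → ℝ => ∑ t ∈ s.powersetCard k, ∏ i ∈ s \ t, -(w i.succ))
      (∑ t ∈ s.powersetCard k, ∑ j ∈ s \ t, (∏ i ∈ (s \ t).erase j, -(v i.succ)) •
        (-(ContinuousLinearMap.proj j.succ : (Fin (n+1) → ℝ) →L[ℝ] ℝ))) v := by
    apply HasFDerivAt.fun_sum
    intro t _
    exact HasFDerivAt.finset_prod (fun i _ => ((ContinuousLinearMap.proj i.succ :
      (Fin (n+1) → ℝ) →L[ℝ] ℝ).hasFDerivAt).neg)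
  convert H using 1
  ext w
  simp only [ContinuousLinearMap.neg_apply, ContinuousLinearMap.sum_apply,
    ContinuousLinearMap.smul_apply, ContinuousLinearMap.proj_apply, smul_eq_mul]
  have swap : ∑ t ∈ s.powersetCard k, ∑ j ∈ s \ t,
        (∏ i ∈ (s \ t).erase j, -(v i.succ)) * -(w j.succ)
      = ∑ j ∈ s, ∑ t ∈ (s.erase j).powersetCard k,
        (∏ i ∈ (s \ t).erase j, -(v i.succ)) * -(w j.succ) := by
    refine Finset.sum_comm' ?_
    intro t j
    simp only [Finset.mem_powersetCard, Finset.mem_sdiff, Finset.subset_erase]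
    tauto
  rw [swap]
  rw [neg_eq_iff_eq_neg, ← Finset.sum_neg_distrib]
  refine Finset.sum_congr rfl fun j hj => ?_
  rw [coeff_prod_X_sub_C']
  rw [Finset.sum_mul, ← Finset.sum_neg_distrib]
  refine Finset.sum_congr rfl fun t ht => ?_
  have hjt : j ∉ t := by
    rw [Finset.mem_powersetCard] at ht
    exact fun h => (Finset.notMem_erase j s) (ht.1 h)
  rw [sdiff_erase_eq hjt]
  ring

/-- reindexing pairs -/
lemma prod_pairs_eq {n : ℕ} (f : Fin n → Fin n → ℝ) :
    ∏ p ∈ Finset.univ.filter (fun p : Fin n × Fin n => p.1 < p.2), f p.1 p.2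
      = ∏ i : Fin n, ∏ j ∈ Finset.Ioi i, f i j := by
  rw [Finset.prod_sigma' Finset.univ (fun i => Finset.Ioi i) (fun i j => f i j)]
  refine Finset.prod_nbij' (fun p : Fin n × Fin n => (⟨p.1, p.2⟩ : Σ _ : Fin n, Fin n))
    (fun p => (p.1, p.2)) ?_ ?_ ?_ ?_ ?_
  · intro a ha
    simp only [Finset.mem_filter] at ha
    simp only [Finset.mem_sigma, Finset.mem_Ioi]
    exact ⟨Finset.mem_univ _, ha.2⟩
  · intro a ha
    simp only [Finset.mem_sigma, Finset.mem_Ioi] at ha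
    simp only [Finset.mem_filter]
    exact ⟨Finset.mem_univ _, ha.2⟩
  · intro a _; rfl
  · intro a _; rfl
  · intro a _; rfl

lemma prod_Iio_swap {n : ℕ} (f : Fin n → Fin n → ℝ) :
    ∏ i : Fin n, ∏ j ∈ Finset.Iio i, f i j = ∏ i : Fin n, ∏ j ∈ Finset.Ioi i, f j i := by
  rw [Finset.prod_sigma' Finset.univ (fun i => Finset.Iio i) (fun i j => f i j),
    Finset.prod_sigma' Finset.univ (fun i => Finset.Ioi i) (fun i j => f j i)]
  refine Finset.prod_nbij' (fun p : Σ _ : Fin n, Fin n => (⟨p.2, p.1⟩ : Σ _ : Fin n, Fin n))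
    (fun p => ⟨p.2, p.1⟩) ?_ ?_ ?_ ?_ ?_
  · intro a ha
    simp only [Finset.mem_sigma, Finset.mem_Iio] at ha
    simp only [Finset.mem_sigma, Finset.mem_Ioi]
    exact ⟨Finset.mem_univ _, ha.2⟩
  · intro a ha
    simp only [Finset.mem_sigma, Finset.mem_Ioi] at ha
    simp only [Finset.mem_sigma, Finset.mem_Iio]
    exact ⟨Finset.mem_univ _, ha.2⟩
  · intro a _; rfl
  · intro a _; rfl
  · intro a _; rfl
open Polynomial Finset

/-- The absolute Jacobian of the map `(b, z₁, …, z_n) ↦ (a₀, …, a_n)` of coefficients of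
`b ∏ (x - z_j)` equals `|b|^n ∏_{i<j} |z_i - z_j|`. -/
theorem stmt5 (n : ℕ) (hn : 2 ≤ n)
    (F : (Fin (n + 1) → ℝ) → (Fin (n + 1) → ℝ))
    (hF : ∀ v k, F v k =
      (Polynomial.C (v 0) * ∏ j : Fin n, (Polynomial.X - Polynomial.C (v j.succ))).coeff k) :
    ∀ v : Fin (n + 1) → ℝ,
      |LinearMap.det ((fderiv ℝ F v).toLinearMap)| =
        |v 0| ^ n *
          ∏ p ∈ Finset.univ.filter (fun p : Fin n × Fin n => p.1 < p.2),
            |v p.1.succ - v p.2.succ| := by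
  have hFeq : F = fun (v : Fin (n+1) → ℝ) (k : Fin (n+1)) =>
      (Polynomial.C (v 0) * ∏ j : Fin n, (Polynomial.X - Polynomial.C (v j.succ))).coeff k :=
    funext fun v => funext fun k => hF v k
  subst hFeq
  intro v
  classical
  set J : Matrix (Fin (n+1)) (Fin (n+1)) ℝ :=
    Matrix.of fun k c => Fin.cases
      ((∏ j : Fin n, (X - C (v j.succ))).coeff (k:ℕ))
      (fun j => -(v 0) * (∏ i ∈ Finset.univ.erase j, (X - C (v i.succ))).coeff (k:ℕ)) c with hJ
  set M : Matrix (Fin (n+1)) (Fin (n+1)) ℝ :=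
    Matrix.of fun k c => Fin.cases
      ((∏ j : Fin n, (X - C (v j.succ))).coeff (k:ℕ))
      (fun j => (∏ i ∈ Finset.univ.erase j, (X - C (v i.succ))).coeff (k:ℕ)) c with hM
  -- Step 1: identify the derivative
  have hder : HasFDerivAt
      (fun w : Fin (n+1) → ℝ => fun k : Fin (n+1) =>
        (Polynomial.C (w 0) * ∏ j : Fin n, (Polynomial.X - Polynomial.C (w j.succ))).coeff (k:ℕ))
      (LinearMap.toContinuousLinearMap (Matrix.toLin' J)) v := by
    rw [hasFDerivAt_pi']
    intro k
    have h0 : HasFDerivAt (fun w : Fin (n+1) → ℝ => w 0)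
        (ContinuousLinearMap.proj 0 : (Fin (n+1) → ℝ) →L[ℝ] ℝ) v :=
      (ContinuousLinearMap.proj 0 : (Fin (n+1) → ℝ) →L[ℝ] ℝ).hasFDerivAt
    have hg := hasFDerivAt_coeff_prod n Finset.univ (k:ℕ) v
    have hmul := h0.fun_mul hg
    have heq : (fun w : Fin (n+1) → ℝ =>
          (Polynomial.C (w 0) * ∏ j : Fin n, (X - C (w j.succ))).coeff (k:ℕ))
        = fun w : Fin (n+1) → ℝ =>
            w 0 * (∏ j ∈ (Finset.univ : Finset (Fin n)), (X - C (w j.succ))).coeff (k:ℕ) := by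
      funext w; rw [coeff_C_mul]
    rw [heq]
    refine hmul.congr_fderiv (Eq.symm ?_)
    ext w
    simp only [ContinuousLinearMap.comp_apply, ContinuousLinearMap.add_apply,
      ContinuousLinearMap.smul_apply, ContinuousLinearMap.neg_apply,
      ContinuousLinearMap.sum_apply, ContinuousLinearMap.proj_apply,
      LinearMap.coe_toContinuousLinearMap', Matrix.toLin'_apply, smul_eq_mul]
    rw [Matrix.mulVec, dotProduct, Fin.sum_univ_succ]
    simp only [hJ, Matrix.of_apply, Fin.cases_zero, Fin.cases_succ]
    rw [add_comm]
    congr 1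
    rw [mul_neg, Finset.mul_sum, ← Finset.sum_neg_distrib]
    exact Finset.sum_congr rfl fun x _ => by ring
  rw [hder.fderiv]
  rw [LinearMap.coe_toContinuousLinearMap, LinearMap.det_toLin']
  -- Step 2: J = column-scaled M
  have hJM : J.det = (-(v 0))^n * M.det := by
    have h1 : J = Matrix.of (fun k i =>
        (Fin.cases 1 (fun _ => -(v 0)) i : ℝ) * M k i) := by
      ext k i
      induction i using Fin.cases with
      | zero => simp [hJ, hM]
      | succ j => simp [hJ, hM]
    rw [h1, Matrix.det_mul_row]
    congr 1
    rw [Fin.prod_univ_succ]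
    simp
  rw [hJM, abs_mul, abs_pow, abs_neg]
  by_cases hinj : Function.Injective (fun j : Fin n => v j.succ)
  · -- injective case
    set W : Matrix (Fin (n+1)) (Fin (n+1)) ℝ :=
      Matrix.of fun r c => Fin.cases (if c = Fin.last n then (1:ℝ) else 0)
        (fun i => v i.succ ^ (c:ℕ)) r with hW
    set dd : Fin (n+1) → ℝ :=
      fun r => Fin.cases 1 (fun i => ∏ l ∈ Finset.univ.erase i, (v i.succ - v l.succ)) r with hdd
    have hQmonic : (∏ j : Fin n, (X - C (v j.succ))).Monic :=
      monic_prod_of_monic _ _ fun j _ => monic_X_sub_C _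
    have hQdeg : (∏ j : Fin n, (X - C (v j.succ))).natDegree = n := by
      rw [Polynomial.natDegree_prod_of_monic _ _ fun j _ => monic_X_sub_C _]
      simp [Polynomial.natDegree_X_sub_C]
    have hQedeg : ∀ j : Fin n,
        (∏ i ∈ Finset.univ.erase j, (X - C (v i.succ))).natDegree = n - 1 := by
      intro j
      rw [Polynomial.natDegree_prod_of_monic _ _ fun i _ => monic_X_sub_C _]
      simp [Polynomial.natDegree_X_sub_C, Finset.card_erase_of_mem]
    have heval : ∀ (p : Polynomial ℝ), p.natDegree < n + 1 → ∀ x : ℝ,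
        ∑ k : Fin (n+1), x ^ (k:ℕ) * p.coeff (k:ℕ) = p.eval x := by
      intro p hp x
      rw [Polynomial.eval_eq_sum_range' hp x,
        ← Fin.sum_univ_eq_sum_range (fun i => p.coeff i * x ^ i) (n+1)]
      exact Finset.sum_congr rfl fun k _ => mul_comm _ _
    have hWM : W * M = Matrix.diagonal dd := by
      ext r c
      rw [Matrix.mul_apply]
      induction r using Fin.cases with
      | zero =>
        have h2 : ∀ k : Fin (n+1), W 0 k * M k c = if k = Fin.last n then M k c else 0 := by
          intro k
          simp only [hW, Matrix.of_apply, Fin.cases_zero]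
          split <;> simp
        rw [Finset.sum_congr rfl fun k _ => h2 k,
          Finset.sum_ite_eq' Finset.univ (Fin.last n) (fun k => M k c)]
        simp only [Finset.mem_univ, if_true]
        induction c using Fin.cases with
        | zero =>
          have hone : M (Fin.last n) 0 = 1 := by
            have h3 := hQmonic.coeff_natDegree
            rw [hQdeg] at h3
            simp [hM, Fin.val_last, h3]
          rw [hone, Matrix.diagonal_apply_eq]
          simp [hdd]
        | succ j =>
          have hzero : M (Fin.last n) j.succ = 0 := by
            simp only [hM, Matrix.of_apply, Fin.cases_succ, Fin.val_last]
            exact Polynomial.coeff_eq_zero_of_natDegree_lt (by rw [hQedeg j]; omega)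
          rw [hzero, Matrix.diagonal_apply_ne _ (Ne.symm (Fin.succ_ne_zero j))]
      | succ i =>
        have h2 : ∀ k : Fin (n+1), W i.succ k * M k c = v i.succ ^ (k:ℕ) * M k c := by
          intro k; simp [hW]
        rw [Finset.sum_congr rfl fun k _ => h2 k]
        induction c using Fin.cases with
        | zero =>
          have hMk : ∀ k : Fin (n+1),
              M k 0 = (∏ j : Fin n, (X - C (v j.succ))).coeff (k:ℕ) := by
            intro k; simp [hM]
          rw [Finset.sum_congr rfl fun k _ => by rw [hMk k],
            heval _ (by rw [hQdeg]; omega) (v i.succ), Polynomial.eval_prod,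
            Finset.prod_eq_zero (Finset.mem_univ i) (by simp),
            Matrix.diagonal_apply_ne _ (Fin.succ_ne_zero i)]
        | succ j =>
          have hMk : ∀ k : Fin (n+1),
              M k j.succ = (∏ l ∈ Finset.univ.erase j, (X - C (v l.succ))).coeff (k:ℕ) := by
            intro k; simp [hM]
          rw [Finset.sum_congr rfl fun k _ => by rw [hMk k],
            heval _ (by rw [hQedeg j]; omega) (v i.succ), Polynomial.eval_prod]
          by_cases hijc : i = j
          · subst hijc
            rw [Matrix.diagonal_apply_eq]
            simp [hdd]
          · rw [Finset.prod_eq_zero (Finset.mem_erase.2 ⟨hijc, Finset.mem_univ i⟩) (by simp),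
              Matrix.diagonal_apply_ne _ (fun h => hijc (Fin.succ_injective n h))]
    have hsub : W.submatrix Fin.succ (Fin.last n).succAbove
        = Matrix.vandermonde (fun i : Fin n => v i.succ) := by
      ext i c
      simp [hW, Fin.succAbove_last, Matrix.vandermonde]
    have hdetW : W.det
        = (-1:ℝ)^n * ∏ i : Fin n, ∏ j ∈ Finset.Ioi i, (v j.succ - v i.succ) := by
      rw [Matrix.det_succ_row_zero, Finset.sum_eq_single (Fin.last n)]
      · rw [hsub, Matrix.det_vandermonde]
        simp [hW, Fin.val_last]
      · intro b _ hb
        simp [hW, hb]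
      · simp
    have hD : W.det * M.det
        = ∏ i : Fin n, ∏ l ∈ Finset.univ.erase i, (v i.succ - v l.succ) := by
      rw [← Matrix.det_mul, hWM, Matrix.det_diagonal, Fin.prod_univ_succ]
      simp [hdd]
    set P : ℝ := ∏ i : Fin n, ∏ j ∈ Finset.Ioi i, |v i.succ - v j.succ| with hP
    have hPfilter : (∏ p ∈ Finset.univ.filter (fun p : Fin n × Fin n => p.1 < p.2),
        |v p.1.succ - v p.2.succ|) = P := prod_pairs_eq (fun i j => |v i.succ - v j.succ|)
    have habsvdm : |∏ i : Fin n, ∏ j ∈ Finset.Ioi i, (v j.succ - v i.succ)| = P := by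
      rw [Finset.abs_prod]
      refine Finset.prod_congr rfl fun i _ => ?_
      rw [Finset.abs_prod]
      exact Finset.prod_congr rfl fun j _ => abs_sub_comm _ _
    have hPne : P ≠ 0 := by
      rw [hP, Finset.prod_ne_zero_iff]
      intro i _
      rw [Finset.prod_ne_zero_iff]
      intro j hj
      have hij : i ≠ j := ne_of_lt (Finset.mem_Ioi.1 hj)
      exact abs_ne_zero.2 (sub_ne_zero.2 fun h => hij (hinj h))
    have habsW : |W.det| = P := by
      rw [hdetW, abs_mul, abs_pow, abs_neg, abs_one, one_pow, one_mul, habsvdm]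
    have habsD : |∏ i : Fin n, ∏ l ∈ Finset.univ.erase i, (v i.succ - v l.succ)| = P * P := by
      have herase : ∀ i : Fin n, Finset.univ.erase i = Finset.Iio i ∪ Finset.Ioi i := by
        intro i; ext l
        simp only [Finset.mem_erase, Finset.mem_union, Finset.mem_Iio, Finset.mem_Ioi,
          Finset.mem_univ, and_true, ne_iff_lt_or_gt]
      have hdisj : ∀ i : Fin n, Disjoint (Finset.Iio i) (Finset.Ioi i) := fun i =>
        Finset.disjoint_left.2 fun l hl hl2 =>
          absurd (Finset.mem_Ioi.1 hl2) (not_lt.2 (le_of_lt (Finset.mem_Iio.1 hl)))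
      rw [Finset.abs_prod]
      calc ∏ i : Fin n, |∏ l ∈ Finset.univ.erase i, (v i.succ - v l.succ)|
          = ∏ i : Fin n, ((∏ l ∈ Finset.Iio i, |v i.succ - v l.succ|)
              * ∏ l ∈ Finset.Ioi i, |v i.succ - v l.succ|) := by
            refine Finset.prod_congr rfl fun i _ => ?_
            rw [herase i, Finset.prod_union (hdisj i), abs_mul, Finset.abs_prod,
              Finset.abs_prod]
        _ = (∏ i : Fin n, ∏ l ∈ Finset.Iio i, |v i.succ - v l.succ|)
              * ∏ i : Fin n, ∏ l ∈ Finset.Ioi i, |v i.succ - v l.succ| :=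
            Finset.prod_mul_distrib
        _ = P * P := by
            congr 1
            rw [prod_Iio_swap (fun i l => |v i.succ - v l.succ|)]
            exact Finset.prod_congr rfl fun i _ => Finset.prod_congr rfl
              fun j _ => abs_sub_comm _ _
    have hMabs : |M.det| = P := by
      have h4 := congrArg abs hD
      rw [abs_mul, habsW, habsD] at h4
      exact mul_left_cancel₀ hPne h4
    rw [hMabs, hPfilter]
  · -- noninjective case
    rw [Function.not_injective_iff] at hinj
    obtain ⟨i, j, heq, hij⟩ := hinj
    have hQe_eq : (∏ l ∈ Finset.univ.erase i, (X - C (v l.succ)))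
        = ∏ l ∈ Finset.univ.erase j, (X - C (v l.succ)) := by
      rw [← Finset.mul_prod_erase (Finset.univ.erase i) _
          (Finset.mem_erase.2 ⟨Ne.symm hij, Finset.mem_univ j⟩),
        ← Finset.mul_prod_erase (Finset.univ.erase j) _
          (Finset.mem_erase.2 ⟨hij, Finset.mem_univ i⟩),
        Finset.erase_right_comm, heq]
    have hMdet : M.det = 0 := by
      apply Matrix.det_zero_of_column_eq (i := i.succ) (j := j.succ)
        (fun h => hij (Fin.succ_injective n h))
      intro k
      simp [hM, hQe_eq]
    have hRHS : (∏ p ∈ Finset.univ.filter (fun p : Fin n × Fin n => p.1 < p.2),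
        |v p.1.succ - v p.2.succ|) = 0 := by
      rcases Ne.lt_or_gt hij with h | h
      · refine Finset.prod_eq_zero (i := (i, j)) (by simp [h]) ?_
        simp [heq]
      · refine Finset.prod_eq_zero (i := (j, i)) (by simp [h]) ?_
        simp [heq]
    rw [hMdet, hRHS]
    simp
end

section
/- Let n ≥ 2 and for δ ≥ 0 define f₀(δ) as the (n+1)-dimensional Lebesgue measure of the set of coefficient vectors a ∈ ℝ^{n+1} such that the polynomial Σ a_j x^j has degree n and all roots real, h(a) ≤ 1, and |D(a)| ≤ δ, where h is a height function and D the discriminant. Then f₀ is continuous, monotonically nondecreasing, and f₀(0) = lim_{δ→0⁺} f₀(δ) = 0. -/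
open MeasureTheory

lemma mvpoly_null : ∀ (m : ℕ) (p : MvPolynomial (Fin m) ℝ), p ≠ 0 →
    volume {x : Fin m → ℝ | MvPolynomial.eval x p = 0} = 0 := by
  intro m
  induction m with
  | zero =>
    intro p hp
    obtain ⟨c, rfl⟩ := MvPolynomial.C_surjective (Fin 0) p
    have hc : c ≠ 0 := fun hc => hp (by simp [hc])
    have : {x : Fin 0 → ℝ | MvPolynomial.eval x (MvPolynomial.C c) = 0} = ∅ := by
      ext x; simp [hc]
    rw [this, measure_empty]
  | succ m ih =>
    intro p hp
    set q := MvPolynomial.finSuccEquiv ℝ m p with hq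
    have hq0 : q ≠ 0 := by
      simp only [hq, ne_eq, EmbeddingLike.map_eq_zero_iff]; exact hp
    obtain ⟨k, hk⟩ : ∃ k, q.coeff k ≠ 0 := by
      by_contra hc
      push_neg at hc
      exact hq0 (Polynomial.ext fun k => by simp [hc k])
    -- the set in product form
    set U : Set ((Fin m → ℝ) × ℝ) :=
      {sy | MvPolynomial.eval (Fin.cons sy.2 sy.1) p = 0} with hU
    have hcons : Continuous fun sy : (Fin m → ℝ) × ℝ => (Fin.cons sy.2 sy.1 : Fin (m+1) → ℝ) := by
      refine continuous_pi fun i => ?_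
      refine Fin.cases ?_ ?_ i
      · exact continuous_snd
      · intro j; exact (continuous_apply j).comp continuous_fst
    have hUm : MeasurableSet U :=
      ((MvPolynomial.continuous_eval (p := p)).comp hcons).measurable (measurableSet_singleton 0)
    have hUnull : (volume : Measure (Fin m → ℝ)).prod volume U = 0 := by
      rw [Measure.measure_prod_null hUm]
      have hN := ih (q.coeff k) hk
      filter_upwards [measure_eq_zero_iff_ae_notMem.mp hN] with s hs
      have hpoly : Polynomial.map (MvPolynomial.eval s) q ≠ 0 := by
        intro hzz
        apply hs
        have := congrArg (fun r => r.coeff k) hzz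
        simpa [Polynomial.coeff_map] using this
      have : (Prod.mk s ⁻¹' U) ⊆ {y | Polynomial.IsRoot (Polynomial.map (MvPolynomial.eval s) q) y} := by
        intro y hy
        simp only [hU, Set.mem_preimage, Set.mem_setOf_eq] at hy
        rw [MvPolynomial.eval_eq_eval_mv_eval'] at hy
        exact hy
      exact measure_mono_null this ((Polynomial.finite_setOf_isRoot hpoly).measure_zero _)
    -- transfer via measurable equiv
    have e := MeasureTheory.volume_preserving_piFinSuccAbove (fun _ : Fin (m+1) => ℝ) 0
    set E := MeasurableEquiv.piFinSuccAbove (fun _ : Fin (m+1) => ℝ) 0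
    have hset : {x : Fin (m+1) → ℝ | MvPolynomial.eval x p = 0} =
        E ⁻¹' (Prod.swap ⁻¹' U) := by
      ext x
      simp only [Set.mem_setOf_eq, Set.mem_preimage, hU]
      have : (Fin.cons ((E x).1) (fun j => (E x).2 j) : Fin (m+1) → ℝ) = x := by
        ext i
        refine Fin.cases ?_ ?_ i
        · rfl
        · intro j; rfl
      rw [show (Prod.swap (E x)) = ((E x).2, (E x).1) from rfl]
      constructor
      · intro hx; simp only [Set.mem_setOf_eq]; rw [show (Fin.cons (E x).1 (E x).2 : Fin (m+1) → ℝ) = x from this]; exact hx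
      · intro hx; simp only [Set.mem_setOf_eq] at hx; rwa [show (Fin.cons (E x).1 (E x).2 : Fin (m+1) → ℝ) = x from this] at hx
    rw [hset, e.measure_preimage ((measurable_swap hUm).nullMeasurableSet),
      Measure.volume_eq_prod, ← Measure.map_apply measurable_swap hUm,
      Measure.prod_swap]
    exact hUnull

lemma sigmacompact_measurable {X : Type*} [TopologicalSpace X] [MeasurableSpace X]
    [T2Space X] [OpensMeasurableSpace X] {s : Set X} (hs : IsSigmaCompact s) :
    MeasurableSet s := by
  obtain ⟨K, hK, rfl⟩ := hs
  exact MeasurableSet.iUnion fun i => (hK i).measurableSet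


/-- The distribution function `f₀(δ)` of the discriminant over totally real polynomials of
height at most 1 is continuous, monotone, vanishes at `0`, and tends to `0` as `δ → 0⁺`. -/
theorem stmt19 (n : ℕ) (hn : 2 ≤ n)
    (h : (Fin (n + 1) → ℝ) → ℝ) (hcont : Continuous h) (hnonneg : ∀ v, 0 ≤ h v)
    (hhom : ∀ (t : ℝ) (v : Fin (n + 1) → ℝ), h (t • v) = |t| * h v)
    (hzero : ∀ v, h v = 0 ↔ v = 0)
    (p : MvPolynomial (Fin (n + 1)) ℝ) (hp : p ≠ 0)
    (hdeg : p.IsHomogeneous (2 * n - 2))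
    (D : (Fin (n + 1) → ℝ) → ℝ) (hD : ∀ a, D a = MvPolynomial.eval a p)
    (f₀ : ℝ → ℝ)
    (hf₀ : ∀ δ : ℝ, f₀ δ = (volume {a : Fin (n + 1) → ℝ |
        a (Fin.last n) ≠ 0 ∧
        (∃ α : Fin n → ℝ, ∀ x : ℝ, (∑ k : Fin (n + 1), a k * x ^ (k : ℕ)) =
          a (Fin.last n) * ∏ j : Fin n, (x - α j)) ∧
        h a ≤ 1 ∧ |D a| ≤ δ}).toReal) :
    Continuous f₀ ∧ Monotone f₀ ∧ f₀ 0 = 0 ∧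
      Filter.Tendsto f₀ (nhdsWithin 0 (Set.Ioi 0)) (nhds 0) := by
  classical
  set A : ℝ → Set (Fin (n + 1) → ℝ) := fun δ => {a : Fin (n + 1) → ℝ |
        a (Fin.last n) ≠ 0 ∧
        (∃ α : Fin n → ℝ, ∀ x : ℝ, (∑ k : Fin (n + 1), a k * x ^ (k : ℕ)) =
          a (Fin.last n) * ∏ j : Fin n, (x - α j)) ∧
        h a ≤ 1 ∧ |D a| ≤ δ} with hA
  have hf₀' : ∀ δ, f₀ δ = (volume (A δ)).toReal := hf₀
  have hDc : Continuous D := by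
    have : D = fun a => MvPolynomial.eval a p := funext hD
    rw [this]; exact MvPolynomial.continuous_eval (p := p)
  -- monotonicity of the sets
  have hAmono : ∀ {δ₁ δ₂ : ℝ}, δ₁ ≤ δ₂ → A δ₁ ⊆ A δ₂ := by
    intro δ₁ δ₂ hle a ha
    exact ⟨ha.1, ha.2.1, ha.2.2.1, ha.2.2.2.trans hle⟩
  -- measurability
  have hmeas : ∀ δ, MeasurableSet (A δ) := by
    intro δ
    have hM1 : MeasurableSet {a : Fin (n + 1) → ℝ | a (Fin.last n) ≠ 0} := by
      have : {a : Fin (n + 1) → ℝ | a (Fin.last n) ≠ 0} =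
          (fun a : Fin (n + 1) → ℝ => a (Fin.last n)) ⁻¹' ({(0:ℝ)}ᶜ) := rfl
      rw [this]
      exact (measurable_pi_apply (Fin.last n)) (measurableSet_singleton (0:ℝ)).compl
    set T : Set ((Fin (n + 1) → ℝ) × (Fin n → ℝ)) :=
      {q | ∀ x : ℝ, (∑ k : Fin (n + 1), q.1 k * x ^ (k : ℕ)) =
          q.1 (Fin.last n) * ∏ j : Fin n, (x - q.2 j)} with hT
    have hTclosed : IsClosed T := by
      have : T = ⋂ x : ℝ, {q : (Fin (n + 1) → ℝ) × (Fin n → ℝ) |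
          (∑ k : Fin (n + 1), q.1 k * x ^ (k : ℕ)) =
          q.1 (Fin.last n) * ∏ j : Fin n, (x - q.2 j)} := by
        ext q; simp only [hT, Set.mem_setOf_eq, Set.mem_iInter]
      rw [this]
      refine isClosed_iInter fun x => isClosed_eq ?_ ?_
      · exact continuous_finset_sum _ fun k _ =>
          (((continuous_apply k).comp continuous_fst).mul continuous_const)
      · exact ((continuous_apply (Fin.last n)).comp continuous_fst).mul
          (continuous_finset_prod _ fun j _ =>
            continuous_const.sub ((continuous_apply j).comp continuous_snd))
    have hEsc : IsSigmaCompact (Prod.fst '' T) :=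
      (isSigmaCompact_univ.of_isClosed_subset hTclosed (Set.subset_univ T)).image
        continuous_fst
    have hM2 : MeasurableSet {a : Fin (n + 1) → ℝ |
        ∃ α : Fin n → ℝ, ∀ x : ℝ, (∑ k : Fin (n + 1), a k * x ^ (k : ℕ)) =
          a (Fin.last n) * ∏ j : Fin n, (x - α j)} := by
      have : {a : Fin (n + 1) → ℝ |
          ∃ α : Fin n → ℝ, ∀ x : ℝ, (∑ k : Fin (n + 1), a k * x ^ (k : ℕ)) =
            a (Fin.last n) * ∏ j : Fin n, (x - α j)} = Prod.fst '' T := by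
        ext a
        constructor
        · rintro ⟨α, hα⟩; exact ⟨(a, α), hα, rfl⟩
        · rintro ⟨⟨a', α⟩, hq, rfl⟩; exact ⟨α, hq⟩
      rw [this]
      exact sigmacompact_measurable hEsc
    have hM3 : MeasurableSet {a : Fin (n + 1) → ℝ | h a ≤ 1} :=
      (isClosed_le hcont continuous_const).measurableSet
    have hM4 : MeasurableSet {a : Fin (n + 1) → ℝ | |D a| ≤ δ} :=
      (isClosed_le hDc.abs continuous_const).measurableSet
    have : A δ = {a : Fin (n + 1) → ℝ | a (Fin.last n) ≠ 0} ∩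
        ({a | ∃ α : Fin n → ℝ, ∀ x : ℝ, (∑ k : Fin (n + 1), a k * x ^ (k : ℕ)) =
          a (Fin.last n) * ∏ j : Fin n, (x - α j)} ∩
        ({a | h a ≤ 1} ∩ {a | |D a| ≤ δ})) := by
      rfl
    rw [this]
    exact hM1.inter (hM2.inter (hM3.inter hM4))
  -- finiteness
  have hfin : ∀ δ, volume (A δ) ≠ ⊤ := by
    have hne : (Metric.sphere (0 : Fin (n + 1) → ℝ) 1).Nonempty :=
      NormedSpace.sphere_nonempty.mpr zero_le_one
    obtain ⟨a₀, ha₀, hmin⟩ :=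
      (isCompact_sphere (0 : Fin (n + 1) → ℝ) 1).exists_isMinOn hne hcont.continuousOn
    have ha₀ne : a₀ ≠ 0 := by
      intro h0
      rw [h0] at ha₀
      simp at ha₀
    have hc : 0 < h a₀ :=
      lt_of_le_of_ne (hnonneg a₀) fun hcc => ha₀ne ((hzero a₀).mp hcc.symm)
    set c := h a₀ with hcdef
    have hbound : ∀ a : Fin (n + 1) → ℝ, h a ≤ 1 → ‖a‖ ≤ c⁻¹ := by
      intro a ha1
      rcases eq_or_ne a 0 with rfl | hane
      · simp [inv_nonneg.mpr hc.le]
      · have hna : (0:ℝ) < ‖a‖ := norm_pos_iff.mpr hane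
        set u := ‖a‖⁻¹ • a with hu
        have hunorm : ‖u‖ = 1 := by
          rw [hu, norm_smul, norm_inv, norm_norm, inv_mul_cancel₀ hna.ne']
        have humem : u ∈ Metric.sphere (0 : Fin (n + 1) → ℝ) 1 := by
          simp [hunorm]
        have hcu : c ≤ h u := hmin humem
        have hrec : a = ‖a‖ • u := by
          rw [hu, smul_smul, mul_inv_cancel₀ hna.ne', one_smul]
        have hha : h a = ‖a‖ * h u := by
          rw [show h a = h (‖a‖ • u) from congrArg h hrec, hhom, abs_of_pos hna]
        have hkey : c * ‖a‖ ≤ 1 := by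
          calc c * ‖a‖ ≤ h u * ‖a‖ := by nlinarith
            _ = h a := by rw [hha, mul_comm]
            _ ≤ 1 := ha1
        have := (mul_le_mul_iff_right₀ hc).mp
          (by rw [mul_inv_cancel₀ hc.ne']; exact hkey : c * ‖a‖ ≤ c * c⁻¹)
        exact this
    intro δ
    have hsub : A δ ⊆ Metric.closedBall 0 c⁻¹ := by
      intro a ha
      rw [Metric.mem_closedBall, dist_zero_right]
      exact hbound a ha.2.2.1
    exact ((measure_mono hsub).trans_lt
      (isCompact_closedBall (0 : Fin (n + 1) → ℝ) c⁻¹).measure_lt_top).ne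
  -- null level sets
  have hlev : ∀ t : ℝ, volume {a : Fin (n + 1) → ℝ | D a = t} = 0 := by
    intro t
    have hne : p - MvPolynomial.C t ≠ 0 := by
      intro heq
      have hpt : p = MvPolynomial.C t := by
        have := sub_eq_zero.mp heq; exact this
      have ht0 : MvPolynomial.coeff 0 p = t := by rw [hpt]; simp
      have hdz : MvPolynomial.coeff 0 p = 0 := by
        apply hdeg.coeff_eq_zero
        simp only [map_zero]
        omega
      rw [hdz] at ht0
      rw [hpt, ← ht0] at hp
      simp at hp
    have : {a : Fin (n + 1) → ℝ | D a = t} =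
        {a : Fin (n + 1) → ℝ | MvPolynomial.eval a (p - MvPolynomial.C t) = 0} := by
      ext a; simp [hD a, sub_eq_zero]
    rw [this]
    exact mvpoly_null (n + 1) _ hne
  have habs : ∀ t : ℝ, volume {a : Fin (n + 1) → ℝ | |D a| = t} = 0 := by
    intro t
    refine measure_mono_null (t := {a : Fin (n + 1) → ℝ | D a = t} ∪ {a | D a = -t}) ?_ ?_
    · intro a ha
      simp only [Set.mem_setOf_eq] at ha
      rcases abs_cases (D a) with ⟨he, _⟩ | ⟨he, _⟩
      · left; simp only [Set.mem_setOf_eq]; linarith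
      · right; simp only [Set.mem_setOf_eq]; linarith
    · exact measure_union_null (hlev t) (hlev (-t))
  -- key limits
  have hright : ∀ δ₀ : ℝ, Filter.Tendsto (fun k : ℕ => volume (A (δ₀ + ((k : ℝ) + 1)⁻¹)))
      Filter.atTop (nhds (volume (A δ₀))) := by
    intro δ₀
    have hInter : ⋂ k : ℕ, A (δ₀ + ((k : ℝ) + 1)⁻¹) = A δ₀ := by
      apply Set.Subset.antisymm
      · intro a ha
        simp only [Set.mem_iInter] at ha
        refine ⟨(ha 0).1, (ha 0).2.1, (ha 0).2.2.1, ?_⟩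
        refine le_of_forall_pos_le_add fun ε hε => ?_
        obtain ⟨k, hk⟩ := exists_nat_one_div_lt hε
        have := (ha k).2.2.2
        rw [one_div] at hk
        linarith
      · refine Set.subset_iInter fun k => hAmono ?_
        have : (0:ℝ) < ((k:ℝ)+1)⁻¹ := by positivity
        linarith
    rw [← hInter]
    refine tendsto_measure_iInter_atTop (fun k => (hmeas _).nullMeasurableSet) ?_ ⟨0, hfin _⟩
    intro i j hij
    apply hAmono
    have h1 : ((i : ℝ) + 1) ≤ ((j : ℝ) + 1) := by exact_mod_cast Nat.succ_le_succ hij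
    gcongr
  have hleft : ∀ δ₀ : ℝ, Filter.Tendsto (fun k : ℕ => volume (A (δ₀ - ((k : ℝ) + 1)⁻¹)))
      Filter.atTop (nhds (volume (A δ₀))) := by
    intro δ₀
    have hUnion : volume (⋃ k : ℕ, A (δ₀ - ((k : ℝ) + 1)⁻¹)) = volume (A δ₀) := by
      apply le_antisymm
      · exact measure_mono (Set.iUnion_subset fun k => hAmono (by
          have : (0:ℝ) < ((k:ℝ)+1)⁻¹ := by positivity
          linarith))
      · have hsub : A δ₀ ⊆ (⋃ k : ℕ, A (δ₀ - ((k : ℝ) + 1)⁻¹)) ∪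
            {a : Fin (n + 1) → ℝ | |D a| = δ₀} := by
          intro a ha
          by_cases hcase : ∃ k : ℕ, |D a| ≤ δ₀ - ((k : ℝ) + 1)⁻¹
          · obtain ⟨k, hk⟩ := hcase
            exact Or.inl (Set.mem_iUnion.mpr ⟨k, ha.1, ha.2.1, ha.2.2.1, hk⟩)
          · push_neg at hcase
            right
            have hge : δ₀ ≤ |D a| := by
              refine le_of_forall_pos_le_add fun ε hε => ?_
              obtain ⟨k, hk⟩ := exists_nat_one_div_lt hε
              have := hcase k
              rw [one_div] at hk
              linarith
            exact le_antisymm ha.2.2.2 hge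
        calc volume (A δ₀) ≤ volume ((⋃ k : ℕ, A (δ₀ - ((k : ℝ) + 1)⁻¹)) ∪
              {a : Fin (n + 1) → ℝ | |D a| = δ₀}) := measure_mono hsub
          _ ≤ volume (⋃ k : ℕ, A (δ₀ - ((k : ℝ) + 1)⁻¹)) +
              volume {a : Fin (n + 1) → ℝ | |D a| = δ₀} := measure_union_le _ _
          _ = volume (⋃ k : ℕ, A (δ₀ - ((k : ℝ) + 1)⁻¹)) := by rw [habs δ₀, add_zero]
    rw [← hUnion]
    refine tendsto_measure_iUnion_atTop ?_
    intro i j hij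
    apply hAmono
    have h1 : ((i : ℝ) + 1) ≤ ((j : ℝ) + 1) := by exact_mod_cast Nat.succ_le_succ hij
    gcongr
  -- real-valued limits
  have hrightR : ∀ δ₀ : ℝ, Filter.Tendsto (fun k : ℕ => f₀ (δ₀ + ((k : ℝ) + 1)⁻¹))
      Filter.atTop (nhds (f₀ δ₀)) := by
    intro δ₀
    simp only [hf₀']
    exact (ENNReal.tendsto_toReal (hfin δ₀)).comp (hright δ₀)
  have hleftR : ∀ δ₀ : ℝ, Filter.Tendsto (fun k : ℕ => f₀ (δ₀ - ((k : ℝ) + 1)⁻¹))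
      Filter.atTop (nhds (f₀ δ₀)) := by
    intro δ₀
    simp only [hf₀']
    exact (ENNReal.tendsto_toReal (hfin δ₀)).comp (hleft δ₀)
  have hmono : Monotone f₀ := by
    intro x y hxy
    rw [hf₀' x, hf₀' y]
    exact ENNReal.toReal_mono (hfin y) (measure_mono (hAmono hxy))
  have hco : Continuous f₀ := by
    rw [Metric.continuous_iff]
    intro δ₀ ε hε
    obtain ⟨K, hK1, hK2⟩ := (((hrightR δ₀).eventually_lt_const
        (lt_add_of_pos_right (f₀ δ₀) hε)).and
      ((hleftR δ₀).eventually_const_lt (sub_lt_self (f₀ δ₀) hε))).exists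
    refine ⟨((K : ℝ) + 1)⁻¹, by positivity, fun δ hδ => ?_⟩
    rw [Real.dist_eq] at hδ ⊢
    have habs' := abs_lt.mp hδ
    have hu : f₀ δ ≤ f₀ (δ₀ + ((K : ℝ) + 1)⁻¹) := hmono (by linarith [habs'.2])
    have hl : f₀ (δ₀ - ((K : ℝ) + 1)⁻¹) ≤ f₀ δ := hmono (by linarith [habs'.1])
    rw [abs_lt]
    constructor <;> linarith
  have h0 : f₀ 0 = 0 := by
    rw [hf₀' 0]
    have : A 0 ⊆ {a : Fin (n + 1) → ℝ | D a = 0} := by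
      intro a ha
      have := ha.2.2.2
      have habs0 : |D a| = 0 := le_antisymm this (abs_nonneg _)
      exact abs_eq_zero.mp habs0
    rw [measure_mono_null this (hlev 0)]
    simp
  refine ⟨hco, hmono, h0, ?_⟩
  have hten : Filter.Tendsto f₀ (nhdsWithin 0 (Set.Ioi 0)) (nhds (f₀ 0)) :=
    (hco.tendsto 0).mono_left nhdsWithin_le_nhds
  rwa [h0] at hten
end
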